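/- (Filters lie in the RKHS of the Gaussian kernel.) Let γ > 0, let σ: ℝ → ℝ be given by a power series σ(t) = ∑_{j=0}^∞ a_j t^j, and define C^γ_σ(λ) = √(∑_{j=0}^∞ (j! e^{2γ} / (2γ)^j) a_j² λ^{2j}). Let w ∈ ℝ^d satisfy C^γ_σ(‖w‖₂) < ∞. Then there exists a square-summable family w◇ ∈ ℓ²(T), indexed by the set T of finite tuples from {1,…,d}, such that ‖w◇‖_{ℓ²} = C^γ_σ(‖w‖₂) and, for every unit vector z ∈ ℝ^d, the family (w◇_τ φ_γ(z)_τ)_{τ∈T} is absolutely summable with ∑_{τ∈T} w◇_τ φ_γ(z)_τ = σ(⟨w, z⟩). -/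

import Mathlib

open scoped RealInnerProductSpace

/-- The index set `T = ⋃_{j ≥ 0} [d]^j` of all finite tuples of indices from `{1,…,d}`. -/
abbrev Tup (d : ℕ) : Type := Σ j : ℕ, Fin j → Fin d

/-- The feature map of the Gaussian RBF kernel with parameter `γ` on the unit sphere:
`φ_γ(z)_{(k₁,…,k_j)} = e^{-γ} ((2γ)^j / j!)^{1/2} z_{k₁} ⋯ z_{k_j}`. -/
noncomputable def phiGauss (d : ℕ) (γ : ℝ) (z : EuclideanSpace ℝ (Fin d)) (τ : Tup d) : ℝ :=
  Real.exp (-γ) * Real.sqrt ((2 * γ) ^ τ.1 / (Nat.factorial τ.1 : ℝ)) *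
    ∏ i : Fin τ.1, z (τ.2 i)

/-- `C^γ_σ(λ) = √(∑_{j=0}^∞ (j! e^{2γ}/(2γ)^j) a_j² λ^{2j})`, the quantity associated
to the Gaussian RBF kernel for an activation with power-series coefficients `a`. -/
noncomputable def CsigmaGauss (γ : ℝ) (a : ℕ → ℝ) (lam : ℝ) : ℝ :=
  Real.sqrt (∑' j : ℕ,
    ((Nat.factorial j : ℝ) * Real.exp (2 * γ) / (2 * γ) ^ j) * (a j) ^ 2 * lam ^ (2 * j))

set_option maxHeartbeats 1000000 in
/-- filters lie in the RKHS of the Gaussian kernel.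
If `σ(t) = ∑_j a_j t^j` (convergent on `[-‖w‖, ‖w‖]`) and `C^γ_σ(‖w‖₂) < ∞`
(i.e. the defining series is summable), then there is `w◇ ∈ ℓ²(T)` with
`‖w◇‖_{ℓ²} = C^γ_σ(‖w‖₂)` such that for every unit vector `z`,
`(w◇_τ φ_γ(z)_τ)_τ` is absolutely summable with sum `σ(⟪w, z⟫)`. -/
theorem filter_in_RKHS_gaussian_kernel
    (d : ℕ) (hd : 1 ≤ d) (γ : ℝ) (hγ : 0 < γ)
    (a : ℕ → ℝ) (σ : ℝ → ℝ)
    (w : EuclideanSpace ℝ (Fin d))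
    (hσ : ∀ t : ℝ, |t| ≤ ‖w‖ → HasSum (fun j : ℕ => a j * t ^ j) (σ t))
    (hC : Summable fun j : ℕ =>
      ((Nat.factorial j : ℝ) * Real.exp (2 * γ) / (2 * γ) ^ j) * (a j) ^ 2 * ‖w‖ ^ (2 * j)) :
    ∃ wd : Tup d → ℝ,
      (Summable fun τ : Tup d => (wd τ) ^ 2) ∧
      Real.sqrt (∑' τ : Tup d, (wd τ) ^ 2) = CsigmaGauss γ a ‖w‖ ∧
      ∀ z : EuclideanSpace ℝ (Fin d), ‖z‖ = 1 →
        (Summable fun τ : Tup d => |wd τ * phiGauss d γ z τ|) ∧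
        HasSum (fun τ : Tup d => wd τ * phiGauss d γ z τ) (σ ⟪w, z⟫) := by
  classical
  have h2γ : (0:ℝ) < 2 * γ := by linarith
  have hpow : ∀ j : ℕ, (0:ℝ) < (2 * γ) ^ j := fun j => pow_pos h2γ j
  have hfact : ∀ j : ℕ, (0:ℝ) < (Nat.factorial j : ℝ) := fun j => by
    exact_mod_cast Nat.factorial_pos j
  set wd : Tup d → ℝ := fun τ =>
    Real.exp γ * Real.sqrt ((Nat.factorial τ.1 : ℝ) / (2 * γ) ^ τ.1) * a τ.1 *
      ∏ i : Fin τ.1, w (τ.2 i) with hwd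
  -- abbreviation for the coefficient sequence of `C`
  set G : ℕ → ℝ := fun j =>
    ((Nat.factorial j : ℝ) * Real.exp (2 * γ) / (2 * γ) ^ j) * (a j) ^ 2 * ‖w‖ ^ (2 * j)
    with hG
  -- ‖w‖² as a finite sum
  have hnormsq : (∑ i : Fin d, (w i) ^ 2) = ‖w‖ ^ 2 := by
    rw [EuclideanSpace.norm_eq, Real.sq_sqrt (by positivity)]
    simp [sq_abs]
  -- square of wd
  have hsq : ∀ τ : Tup d, (wd τ) ^ 2 =
      ((Nat.factorial τ.1 : ℝ) * Real.exp (2 * γ) / (2 * γ) ^ τ.1) * (a τ.1) ^ 2 *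
        ∏ i : Fin τ.1, (w (τ.2 i)) ^ 2 := by
    intro τ
    have h1 : (Real.sqrt ((Nat.factorial τ.1 : ℝ) / (2 * γ) ^ τ.1)) ^ 2 =
        (Nat.factorial τ.1 : ℝ) / (2 * γ) ^ τ.1 :=
      Real.sq_sqrt (by positivity)
    have h2 : (Real.exp γ) ^ 2 = Real.exp (2 * γ) := by
      rw [← Real.exp_nat_mul]; norm_num
    have h3 : (wd τ) ^ 2 = (Real.exp γ) ^ 2 *
        (Real.sqrt ((Nat.factorial τ.1 : ℝ) / (2 * γ) ^ τ.1)) ^ 2 * (a τ.1) ^ 2 *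
        (∏ i : Fin τ.1, w (τ.2 i)) ^ 2 := by rw [hwd]; ring
    rw [h3, h1, h2, ← Finset.prod_pow]
    ring
  -- fiber HasSum of squares
  have hfib : ∀ j : ℕ, HasSum (fun k : Fin j → Fin d => (wd ⟨j, k⟩) ^ 2) (G j) := by
    intro j
    have := hasSum_fintype (fun k : Fin j → Fin d => (wd ⟨j, k⟩) ^ 2)
    convert this using 1
    have : (∑ k : Fin j → Fin d, (wd ⟨j, k⟩) ^ 2) =
        ((Nat.factorial j : ℝ) * Real.exp (2 * γ) / (2 * γ) ^ j) * (a j) ^ 2 *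
          ∑ k : Fin j → Fin d, ∏ i : Fin j, (w (k i)) ^ 2 := by
      rw [Finset.mul_sum]
      exact Finset.sum_congr rfl fun k _ => hsq ⟨j, k⟩
    rw [this, ← Fintype.sum_pow (fun i : Fin d => (w i) ^ 2) j, hnormsq, ← pow_mul',
      mul_comm j 2]
  have hnn : ∀ τ : Tup d, (0:ℝ) ≤ (wd τ) ^ 2 := fun τ => sq_nonneg _
  have hsummable : Summable fun τ : Tup d => (wd τ) ^ 2 := by
    refine (summable_sigma_of_nonneg hnn).2 ⟨fun j => (hfib j).summable, ?_⟩
    refine (summable_congr fun j => (hfib j).tsum_eq).2 hC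
  have htsum : (∑' τ : Tup d, (wd τ) ^ 2) = ∑' j : ℕ, G j :=
    (HasSum.sigma_of_hasSum hC.hasSum hfib hsummable).tsum_eq
  refine ⟨wd, hsummable, by rw [htsum]; simp only [hG, CsigmaGauss], ?_⟩
  -- the key summability of |a j| * ‖w‖^j
  have habs : Summable fun j : ℕ => |a j| * ‖w‖ ^ j := by
    set c : ℕ → ℝ := fun j => (2 * γ) ^ j / (Nat.factorial j : ℝ) * Real.exp (- (2 * γ))
      with hc
    have hcs : Summable c := (Real.summable_pow_div_factorial (2 * γ)).mul_right _
    refine Summable.of_nonneg_of_le (fun j => by positivity)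
      (fun j => ?_) (((hC.add hcs).div_const 2))
    have hGc : |a j| * ‖w‖ ^ j = Real.sqrt (G j) * Real.sqrt (c j) := by
      rw [← Real.sqrt_mul (by rw [hG]; positivity)]
      have h1 : ((2*γ)^j : ℝ) ≠ 0 := (hpow j).ne'
      have h2 : (Nat.factorial j : ℝ) ≠ 0 := (hfact j).ne'
      have h3 : Real.exp (2*γ) * Real.exp (-(2*γ)) = 1 := by
        rw [← Real.exp_add]; simp
      have key : G j * c j = (Real.exp (2*γ) * Real.exp (-(2*γ))) *
          ((Nat.factorial j : ℝ) / (Nat.factorial j : ℝ)) *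
          (((2*γ)^j : ℝ) / ((2*γ)^j : ℝ)) * (a j ^ 2 * ‖w‖ ^ (2*j)) := by
        rw [hG, hc]; ring
      rw [div_self h2, div_self h1, h3] at key
      simp only [one_mul] at key
      have key2 : G j * c j = (|a j| * ‖w‖ ^ j) ^ 2 := by
        rw [key, mul_pow, sq_abs, ← pow_mul']
      rw [key2, Real.sqrt_sq (by positivity)]
    rw [hGc]
    have hGnn : 0 ≤ G j := by
      rw [hG]; positivity
    have hcnn : 0 ≤ c j := by rw [hc]; positivity
    nlinarith [Real.sq_sqrt hGnn, Real.sq_sqrt hcnn,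
      sq_nonneg (Real.sqrt (G j) - Real.sqrt (c j)), Real.sqrt_nonneg (G j),
      Real.sqrt_nonneg (c j)]
  intro z hz
  set t : ℝ := ⟪w, z⟫ with htd
  have ht : |t| ≤ ‖w‖ := by
    have := abs_real_inner_le_norm w z
    rwa [hz, mul_one] at this
  -- the product formula for wd * φ
  have hprod : ∀ τ : Tup d, wd τ * phiGauss d γ z τ =
      a τ.1 * ∏ i : Fin τ.1, (w (τ.2 i) * z (τ.2 i)) := by
    intro τ
    have h1 : Real.sqrt ((Nat.factorial τ.1 : ℝ) / (2 * γ) ^ τ.1) *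
        Real.sqrt ((2 * γ) ^ τ.1 / (Nat.factorial τ.1 : ℝ)) = 1 := by
      rw [← Real.sqrt_mul (by positivity)]
      rw [div_mul_div_comm, mul_comm]
      rw [div_self (by positivity), Real.sqrt_one]
    have h2 : Real.exp γ * Real.exp (-γ) = 1 := by
      rw [← Real.exp_add]; simp
    simp only [hwd, phiGauss]
    calc Real.exp γ * Real.sqrt ((Nat.factorial τ.1 : ℝ) / (2 * γ) ^ τ.1) * a τ.1 *
          (∏ i : Fin τ.1, w (τ.2 i)) *
          (Real.exp (-γ) * Real.sqrt ((2 * γ) ^ τ.1 / (Nat.factorial τ.1 : ℝ)) *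
            ∏ i : Fin τ.1, z (τ.2 i))
        = (Real.exp γ * Real.exp (-γ)) *
            (Real.sqrt ((Nat.factorial τ.1 : ℝ) / (2 * γ) ^ τ.1) *
              Real.sqrt ((2 * γ) ^ τ.1 / (Nat.factorial τ.1 : ℝ))) *
            (a τ.1 * ((∏ i : Fin τ.1, w (τ.2 i)) * ∏ i : Fin τ.1, z (τ.2 i))) := by ring
      _ = a τ.1 * ∏ i : Fin τ.1, (w (τ.2 i) * z (τ.2 i)) := by
          rw [h1, h2, ← Finset.prod_mul_distrib]; ring
  -- inner product as a finite sum
  have hinner : (∑ i : Fin d, w i * z i) = t := by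
    rw [htd, PiLp.inner_apply]
    simp [RCLike.inner_apply, mul_comm]
  -- fiber HasSum for the values
  have hfibv : ∀ j : ℕ, HasSum (fun k : Fin j → Fin d =>
      wd ⟨j, k⟩ * phiGauss d γ z ⟨j, k⟩) (a j * t ^ j) := by
    intro j
    have := hasSum_fintype (fun k : Fin j → Fin d => wd ⟨j, k⟩ * phiGauss d γ z ⟨j, k⟩)
    convert this using 1
    calc a j * t ^ j = a j * (∑ i : Fin d, w i * z i) ^ j := by rw [hinner]
      _ = a j * ∑ k : Fin j → Fin d, ∏ i : Fin j, (w (k i) * z (k i)) := by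
          rw [Fintype.sum_pow (fun i : Fin d => w i * z i) j]
      _ = ∑ k : Fin j → Fin d, a j * ∏ i : Fin j, (w (k i) * z (k i)) := by
          rw [Finset.mul_sum]
      _ = _ := Finset.sum_congr rfl fun k _ => (hprod ⟨j, k⟩).symm
  -- fiber HasSum for absolute values
  have hfiba : ∀ j : ℕ, HasSum (fun k : Fin j → Fin d =>
      |wd ⟨j, k⟩ * phiGauss d γ z ⟨j, k⟩|) (|a j| * (∑ i : Fin d, |w i * z i|) ^ j) := by
    intro j
    have := hasSum_fintype (fun k : Fin j → Fin d => |wd ⟨j, k⟩ * phiGauss d γ z ⟨j, k⟩|)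
    convert this using 1
    calc |a j| * (∑ i : Fin d, |w i * z i|) ^ j
        = |a j| * ∑ k : Fin j → Fin d, ∏ i : Fin j, |w (k i) * z (k i)| := by
          rw [Fintype.sum_pow (fun i : Fin d => |w i * z i|) j]
      _ = ∑ k : Fin j → Fin d, |a j| * ∏ i : Fin j, |w (k i) * z (k i)| := by
          rw [Finset.mul_sum]
      _ = _ := by
          refine Finset.sum_congr rfl fun k _ => ?_
          rw [hprod ⟨j, k⟩, abs_mul, Finset.abs_prod]
  -- the base of the absolute sums is ≤ ‖w‖
  have hsle : (∑ i : Fin d, |w i * z i|) ≤ ‖w‖ := by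
    set w' : EuclideanSpace ℝ (Fin d) := WithLp.toLp 2 (fun i => |w i|) with hw'
    set z' : EuclideanSpace ℝ (Fin d) := WithLp.toLp 2 (fun i => |z i|) with hz'
    have h1 : (∑ i : Fin d, |w i * z i|) = ⟪w', z'⟫ := by
      rw [PiLp.inner_apply]
      simp [RCLike.inner_apply, hw', hz', abs_mul, mul_comm]
    have h2 : ‖w'‖ = ‖w‖ := by
      rw [EuclideanSpace.norm_eq, EuclideanSpace.norm_eq]
      congr 1
      exact Finset.sum_congr rfl fun i _ => by simp [hw']
    have h3 : ‖z'‖ = ‖z‖ := by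
      rw [EuclideanSpace.norm_eq, EuclideanSpace.norm_eq]
      congr 1
      exact Finset.sum_congr rfl fun i _ => by simp [hz']
    calc (∑ i : Fin d, |w i * z i|) = ⟪w', z'⟫ := h1
      _ ≤ ‖w'‖ * ‖z'‖ := real_inner_le_norm w' z'
      _ = ‖w‖ := by rw [h2, h3, hz, mul_one]
  have hs0 : (0:ℝ) ≤ ∑ i : Fin d, |w i * z i| := Finset.sum_nonneg fun i _ => abs_nonneg _
  -- summability over ℕ of the absolute fiber sums
  have habsz : Summable fun j : ℕ => |a j| * (∑ i : Fin d, |w i * z i|) ^ j := by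
    refine Summable.of_nonneg_of_le (fun j => by positivity) (fun j => ?_) habs
    exact mul_le_mul_of_nonneg_left (pow_le_pow_left₀ hs0 hsle j) (abs_nonneg _)
  have hSabs : Summable fun τ : Tup d => |wd τ * phiGauss d γ z τ| := by
    refine (summable_sigma_of_nonneg fun τ => abs_nonneg _).2
      ⟨fun j => (hfiba j).summable, ?_⟩
    refine (summable_congr fun j => (hfiba j).tsum_eq).2 habsz
  refine ⟨hSabs, ?_⟩
  exact HasSum.sigma_of_hasSum (hσ t ht) hfibv (hSabs.of_abs)
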